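/- For all α, ε ∈ (0,1] there exists n₀ such that the following holds for all n ≥ n₀. If G is an n-vertex graph with exactly α·C(n,2) edges, then ssp(G) ≥ (√(3α+1) − 1 − ε)·n. -/

import Mathlib

open SimpleGraph

/-- A strong-separating path system in `G`: a list of paths of `G` such that
for any two distinct edges `e, f` of `G` some path contains `e` but not `f`. -/
def IsStrongSeparatingSystem {V : Type} (G : SimpleGraph V)
    (P : List (Σ u : V, Σ v : V, G.Walk u v)) : Prop :=
  (∀ p ∈ P, p.2.2.IsPath) ∧
  (∀ e ∈ G.edgeSet, ∀ f ∈ G.edgeSet, e ≠ f →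
    ∃ p ∈ P, e ∈ p.2.2.edges ∧ f ∉ p.2.2.edges)

/-- `ssp G` is the minimum size of a strong-separating path system in `G`. -/
noncomputable def ssp {V : Type} (G : SimpleGraph V) : ℕ :=
  sInf { k : ℕ | ∃ P : List (Σ u : V, Σ v : V, G.Walk u v),
    IsStrongSeparatingSystem G P ∧ P.length = k }

-- Every graph on `Fin n` has a strong-separating path system
-- (the system of all single-edge paths).
open Finset in
lemma exists_sss {n : ℕ} (G : SimpleGraph (Fin n)) :
    ∃ P : List (Σ u : Fin n, Σ v : Fin n, G.Walk u v), IsStrongSeparatingSystem G P := by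
  classical
  refine ⟨((Finset.univ.filter (fun p : Fin n × Fin n => G.Adj p.1 p.2)).attach.toList).map
    (fun p => ⟨p.1.1, p.1.2, Walk.cons (by
        have := p.2; simp only [Finset.mem_filter] at this; exact this.2) Walk.nil⟩), ?_, ?_⟩
  · intro p hp
    simp only [List.mem_map] at hp
    obtain ⟨q, -, rfl⟩ := hp
    have hadj : G.Adj q.1.1 q.1.2 := by
      have := q.2; simp only [Finset.mem_filter] at this; exact this.2
    simp [Walk.isPath_def, hadj.ne]
  · intro e he f hf hef
    induction e using Sym2.ind with
    | _ u v =>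
      rw [mem_edgeSet] at he
      refine ⟨⟨u, v, Walk.cons he Walk.nil⟩, ?_, ?_, ?_⟩
      · simp only [List.mem_map]
        exact ⟨⟨(u,v), by simp [he]⟩, Finset.mem_toList.mpr (Finset.mem_attach _ _), rfl⟩
      · simp
      · simp only [Walk.edges_cons, Walk.edges_nil, List.mem_singleton]
        exact fun h => hef h.symm

-- Key counting bound: if `P` is a strong-separating path system with `k` paths,
-- then `6m ≤ 2kn + 4k + k² + 6` where `m` is the number of edges.
open Finset in
lemma sss_length_bound {n : ℕ} (hn : 1 ≤ n) (G : SimpleGraph (Fin n))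
    (P : List (Σ u : Fin n, Σ v : Fin n, G.Walk u v))
    (hP : IsStrongSeparatingSystem G P) :
    6 * G.edgeSet.ncard ≤ 2 * P.length * n + 4 * P.length + P.length ^ 2 + 6 := by
  classical
  obtain ⟨hpath, hsep⟩ := hP
  set k := P.length with hk
  have hEfin : G.edgeSet.Finite := Set.toFinite _
  set E : Finset (Sym2 (Fin n)) := hEfin.toFinset with hEdef
  have hEmem : ∀ e, e ∈ E ↔ e ∈ G.edgeSet := fun e => hEfin.mem_toFinset
  have hmE : G.edgeSet.ncard = E.card := Set.ncard_eq_toFinset_card _ hEfin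
  set S : Sym2 (Fin n) → Finset (Fin k) :=
    fun e => Finset.univ.filter (fun i : Fin P.length => e ∈ (P.get i).2.2.edges) with hSdef
  -- injectivity
  have hinj : Set.InjOn S G.edgeSet := by
    intro e he f hf hSef
    by_contra hne
    obtain ⟨p, hpP, hep, hfp⟩ := hsep e he f hf hne
    obtain ⟨i, rfl⟩ := List.mem_iff_get.mp hpP
    have hi : i ∈ S e := by
      simp only [hSdef, Finset.mem_filter]
      exact ⟨Finset.mem_univ _, hep⟩
    rw [hSef] at hi
    simp only [hSdef, Finset.mem_filter] at hi
    exact hfp hi.2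
  -- sum bound
  have hsum : ∑ e ∈ E, (S e).card ≤ k * (n - 1) := by
    have hswap : ∑ e ∈ E, (S e).card
        = ∑ i : Fin k, (E.filter (fun e => e ∈ (P.get i).2.2.edges)).card := by
      simp only [hSdef, Finset.card_filter]
      rw [Finset.sum_comm]
      exact Finset.sum_congr rfl (fun x _ => Finset.card_filter _ _)
    rw [hswap]
    have hone : ∀ i : Fin k, (E.filter (fun e => e ∈ (P.get i).2.2.edges)).card ≤ n - 1 := by
      intro i
      set w := (P.get i).2.2 with hw
      have hwp : w.IsPath := hpath _ (P.get_mem i)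
      have h1 : (E.filter (fun e => e ∈ w.edges)).card ≤ w.edges.toFinset.card := by
        apply Finset.card_le_card
        intro e he
        rw [List.mem_toFinset]
        exact (Finset.mem_filter.mp he).2
      have h2 : w.edges.toFinset.card ≤ w.edges.length := w.edges.toFinset_card_le
      have h3 : w.edges.length = w.length := w.length_edges
      have h4 : w.length + 1 ≤ n := by
        have := hwp.support_nodup.length_le_card
        simpa [w.length_support] using this
      omega
    calc ∑ i : Fin k, (E.filter (fun e => e ∈ (P.get i).2.2.edges)).card
        ≤ ∑ _i : Fin k, (n - 1) := Finset.sum_le_sum (fun i _ => hone i)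
      _ = k * (n - 1) := by simp [Finset.sum_const, Finset.card_univ]
  -- class bounds
  have hclass : ∀ j, (E.filter (fun e => (S e).card = j)).card ≤ Nat.choose k j := by
    intro j
    have := Finset.card_le_card_of_injOn S
      (t := Finset.powersetCard j (Finset.univ : Finset (Fin k)))
      (fun e he => by
        rw [Finset.mem_coe, Finset.mem_powersetCard]
        exact ⟨Finset.subset_univ _, (Finset.mem_filter.mp he).2⟩)
      (fun e he f hf hef => hinj ((hEmem e).mp (Finset.mem_filter.mp he).1)
        ((hEmem f).mp (Finset.mem_filter.mp hf).1) hef)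
    simpa [Finset.card_powersetCard] using this
  -- main count
  have hpoint : ∀ e ∈ E, 3 ≤ (S e).card + ((if (S e).card = 0 then 3 else 0)
      + (if (S e).card = 1 then 2 else 0) + (if (S e).card = 2 then 1 else 0)) := by
    intro e _
    split_ifs <;> omega
  have hite : ∀ (a : ℕ) (j : ℕ), ∑ e ∈ E, (if (S e).card = j then a else 0)
      = a * (E.filter (fun e => (S e).card = j)).card := by
    intro a j
    rw [← Finset.sum_filter, Finset.sum_const, smul_eq_mul, mul_comm]
  have hmain : 3 * E.card ≤ ∑ e ∈ E, (S e).card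
      + (3 * (E.filter (fun e => (S e).card = 0)).card
        + 2 * (E.filter (fun e => (S e).card = 1)).card
        + 1 * (E.filter (fun e => (S e).card = 2)).card) := by
    calc 3 * E.card = ∑ _e ∈ E, 3 := by simp [mul_comm]
      _ ≤ ∑ e ∈ E, ((S e).card + ((if (S e).card = 0 then 3 else 0)
          + (if (S e).card = 1 then 2 else 0) + (if (S e).card = 2 then 1 else 0))) :=
            Finset.sum_le_sum hpoint
      _ = ∑ e ∈ E, (S e).card
          + (3 * (E.filter (fun e => (S e).card = 0)).card
            + 2 * (E.filter (fun e => (S e).card = 1)).card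
            + 1 * (E.filter (fun e => (S e).card = 2)).card) := by
        rw [Finset.sum_add_distrib, Finset.sum_add_distrib, Finset.sum_add_distrib,
          hite 3 0, hite 2 1, hite 1 2]
  have hc0 := hclass 0
  have hc1 := hclass 1
  have hc2 := hclass 2
  rw [Nat.choose_zero_right] at hc0
  rw [Nat.choose_one_right] at hc1
  rw [Nat.choose_two_right] at hc2
  -- 3*m ≤ k*(n-1) + 3 + 2k + k*(k-1)/2
  have h3m : 3 * E.card ≤ k * (n - 1) + 3 + 2 * k + k * (k - 1) / 2 := by
    have := hmain
    omega
  -- double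
  have hdiv : 2 * (k * (k - 1) / 2) ≤ k * k := by
    have h := Nat.div_mul_le_self (k * (k-1)) 2
    have : k * (k - 1) ≤ k * k := Nat.mul_le_mul_left _ (Nat.sub_le _ _)
    omega
  have hkn : k * (n - 1) ≤ k * n := Nat.mul_le_mul_left _ (Nat.sub_le _ _)
  have hsq : k ^ 2 = k * k := sq k
  have hlin : 2 * k * n = k * n + k * n := by ring
  rw [hmE]
  omega

/-- Lower bound for graphs with `α C(n,2)` edges:
`ssp(G) ≥ (√(3α+1) − 1 − ε) n`. -/
theorem ssp_lower_bound_general (α ε : ℝ) (hα : α ∈ Set.Ioc (0:ℝ) 1)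
    (hε : ε ∈ Set.Ioc (0:ℝ) 1) :
    ∃ n₀ : ℕ, ∀ n ≥ n₀, ∀ G : SimpleGraph (Fin n),
      (G.edgeSet.ncard : ℝ) = α * (n * (n - 1) / 2) →
      (Real.sqrt (3 * α + 1) - 1 - ε) * n ≤ (ssp G : ℝ) := by
  obtain ⟨hα0, hα1⟩ := hα
  obtain ⟨hε0, hε1⟩ := hε
  refine ⟨⌈2/ε⌉₊ + 2, fun n hn G hm => ?_⟩
  have hn2 : 2 ≤ n := by omega
  have hεn : 2 ≤ ε * n := by
    have h1 : (2:ℝ)/ε ≤ ⌈2/ε⌉₊ := Nat.le_ceil _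
    have h2 : ((⌈2/ε⌉₊ : ℕ) : ℝ) ≤ n := by exact_mod_cast le_trans (by omega) hn
    have := le_trans h1 h2
    rw [div_le_iff₀ hε0] at this
    linarith [this]
  have hne : { k : ℕ | ∃ P : List (Σ u : Fin n, Σ v : Fin n, G.Walk u v),
      IsStrongSeparatingSystem G P ∧ P.length = k }.Nonempty := by
    obtain ⟨P, hP⟩ := exists_sss G
    exact ⟨P.length, P, hP, rfl⟩
  obtain ⟨P, hP, hlen⟩ := Nat.sInf_mem hne
  have key := sss_length_bound (by omega) G P hP
  set k := P.length with hkdef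
  -- cast to ℝ
  have keyR : 6 * (G.edgeSet.ncard : ℝ) ≤ 2*(k:ℝ)*n + 4*k + (k:ℝ)^2 + 6 := by
    exact_mod_cast key
  rw [hm] at keyR
  have hnR : (2:ℝ) ≤ (n:ℝ) := by exact_mod_cast hn2
  have hsq : (3*α+1) * (n:ℝ)^2 ≤ ((k:ℝ) + n + 2)^2 := by nlinarith
  have hs : Real.sqrt (3*α+1) * n ≤ (k:ℝ) + n + 2 := by
    have h0 : (0:ℝ) ≤ (k:ℝ) + n + 2 := by positivity
    have h1 : Real.sqrt ((3*α+1) * (n:ℝ)^2) ≤ (k:ℝ) + n + 2 := by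
      rw [show ((k:ℝ)+n+2) = Real.sqrt (((k:ℝ)+n+2)^2) from (Real.sqrt_sq h0).symm]
      exact Real.sqrt_le_sqrt hsq
    rwa [Real.sqrt_mul (by linarith) _, Real.sqrt_sq (by positivity)] at h1
  rw [ssp, ← hlen]
  nlinarith [hs, hεn]
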